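/- Near-optimal actor NLL implies approximate action sufficiency: with Z = φ(S,G), for every policy π the action sufficiency gap is bounded by the excess log-loss, I(A;G|S,Z) ≤ L_act(π;φ) − H(A|S,G). Consequently, if L_act(π;φ) ≤ H(A|S,G) + ε for some ε ≥ 0, then I(A;G|S,Z) ≤ ε. -/

import Mathlib

open scoped Classical
open Finset

/-- Joint probability `P(f = x)` of a discrete random variable `f` on the sample space
`𝒮 × 𝒢 × 𝒜` equipped with the pmf `p`. -/
noncomputable def Pr {𝒮 𝒢 𝒜 : Type*} [Fintype 𝒮] [Fintype 𝒢] [Fintype 𝒜] {X : Type*}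
    (p : 𝒮 × 𝒢 × 𝒜 → ℝ) (f : 𝒮 × 𝒢 × 𝒜 → X) (x : X) : ℝ :=
  ∑ ω : 𝒮 × 𝒢 × 𝒜, if f ω = x then p ω else 0

/-- Conditional mutual information `I(X;Y|W)` of discrete random variables that are
deterministic functions of a sample drawn from the pmf `p` on `𝒮 × 𝒢 × 𝒜`. -/
noncomputable def CMI {𝒮 𝒢 𝒜 : Type*} [Fintype 𝒮] [Fintype 𝒢] [Fintype 𝒜]
    {X Y W : Type*} [Fintype X] [Fintype Y] [Fintype W]
    (p : 𝒮 × 𝒢 × 𝒜 → ℝ) (fX : 𝒮 × 𝒢 × 𝒜 → X) (fY : 𝒮 × 𝒢 × 𝒜 → Y)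
    (fW : 𝒮 × 𝒢 × 𝒜 → W) : ℝ :=
  ∑ x : X, ∑ y : Y, ∑ w : W,
    if 0 < Pr p (fun ω => (fX ω, fY ω, fW ω)) (x, y, w) then
      Pr p (fun ω => (fX ω, fY ω, fW ω)) (x, y, w) *
        Real.log ((Pr p (fun ω => (fX ω, fY ω, fW ω)) (x, y, w) * Pr p fW w) /
          (Pr p (fun ω => (fX ω, fW ω)) (x, w) * Pr p (fun ω => (fY ω, fW ω)) (y, w)))
    else 0

/-- Marginal `p(s,g) := ∑ₐ p(s,g,a)`. -/
noncomputable def pSG {𝒮 𝒢 𝒜 : Type*} [Fintype 𝒜] (p : 𝒮 × 𝒢 × 𝒜 → ℝ) (s : 𝒮) (g : 𝒢) : ℝ :=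
  ∑ a : 𝒜, p (s, g, a)

/-- Conditional `p(a|s,g) := p(s,g,a) / p(s,g)`. -/
noncomputable def pA {𝒮 𝒢 𝒜 : Type*} [Fintype 𝒜] (p : 𝒮 × 𝒢 × 𝒜 → ℝ) (s : 𝒮) (g : 𝒢)
    (a : 𝒜) : ℝ :=
  p (s, g, a) / pSG p s g

/-- Induced representation-conditioned distribution
`p(a|s,z) := (∑_{g' : φ(s,g')=z} p(s,g',a)) / (∑_{g' : φ(s,g')=z} p(s,g'))`. -/
noncomputable def pAZ {𝒮 𝒢 𝒜 𝒵 : Type*} [Fintype 𝒢] [Fintype 𝒜] (p : 𝒮 × 𝒢 × 𝒜 → ℝ)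
    (φ : 𝒮 × 𝒢 → 𝒵) (s : 𝒮) (z : 𝒵) (a : 𝒜) : ℝ :=
  (∑ g' : 𝒢, if φ (s, g') = z then p (s, g', a) else 0) /
    (∑ g' : 𝒢, if φ (s, g') = z then pSG p s g' else 0)

/-- The conditional KL risk `R(π;φ)`. -/
noncomputable def KLRisk {𝒮 𝒢 𝒜 𝒵 : Type*} [Fintype 𝒮] [Fintype 𝒢] [Fintype 𝒜]
    (p : 𝒮 × 𝒢 × 𝒜 → ℝ) (φ : 𝒮 × 𝒢 → 𝒵) (π : 𝒮 → 𝒵 → 𝒜 → ℝ) : ℝ :=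
  ∑ s : 𝒮, ∑ g : 𝒢,
    if 0 < pSG p s g then
      pSG p s g * ∑ a : 𝒜,
        (if 0 < pA p s g a then pA p s g a * Real.log (pA p s g a / π s (φ (s, g)) a) else 0)
    else 0

/-- The actor log-loss `L_act(π;φ) := ∑_{p(s,g,a)>0} p(s,g,a) · (− log π(a|s,φ(s,g)))`. -/
noncomputable def Lact {𝒮 𝒢 𝒜 𝒵 : Type*} [Fintype 𝒮] [Fintype 𝒢] [Fintype 𝒜]
    (p : 𝒮 × 𝒢 × 𝒜 → ℝ) (φ : 𝒮 × 𝒢 → 𝒵) (π : 𝒮 → 𝒵 → 𝒜 → ℝ) : ℝ :=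
  ∑ s : 𝒮, ∑ g : 𝒢, ∑ a : 𝒜,
    if 0 < p (s, g, a) then p (s, g, a) * (-Real.log (π s (φ (s, g)) a)) else 0

/-- The conditional entropy `H(A|S,G) := −∑_{p(s,g,a)>0} p(s,g,a) · log p(a|s,g)`. -/
noncomputable def HASG {𝒮 𝒢 𝒜 : Type*} [Fintype 𝒮] [Fintype 𝒢] [Fintype 𝒜]
    (p : 𝒮 × 𝒢 × 𝒜 → ℝ) : ℝ :=
  -∑ s : 𝒮, ∑ g : 𝒢, ∑ a : 𝒜,
    if 0 < p (s, g, a) then p (s, g, a) * Real.log (pA p s g a) else 0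

/-- The conditional entropy `H(A|S,Z) := −∑_{p(s,g,a)>0} p(s,g,a) · log p(a|s,φ(s,g))`. -/
noncomputable def HASZ {𝒮 𝒢 𝒜 𝒵 : Type*} [Fintype 𝒮] [Fintype 𝒢] [Fintype 𝒜]
    (p : 𝒮 × 𝒢 × 𝒜 → ℝ) (φ : 𝒮 × 𝒢 → 𝒵) : ℝ :=
  -∑ s : 𝒮, ∑ g : 𝒢, ∑ a : 𝒜,
    if 0 < p (s, g, a) then p (s, g, a) * Real.log (pAZ p φ s (φ (s, g)) a) else 0

set_option linter.unusedSectionVars false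
set_option linter.unusedVariables false

section helpers
variable {𝒮 𝒢 𝒜 𝒵 : Type*} [Fintype 𝒮] [Fintype 𝒢] [Fintype 𝒜] [Fintype 𝒵]

/-- fiber-summed joint `q(s,z,a)`. -/
noncomputable def qq (p : 𝒮 × 𝒢 × 𝒜 → ℝ) (φ : 𝒮 × 𝒢 → 𝒵) (s : 𝒮) (z : 𝒵) (a : 𝒜) : ℝ :=
  ∑ g : 𝒢, if φ (s, g) = z then p (s, g, a) else 0

/-- fiber-summed marginal `Q(s,z)`. -/
noncomputable def QQ (p : 𝒮 × 𝒢 × 𝒜 → ℝ) (φ : 𝒮 × 𝒢 → 𝒵) (s : 𝒮) (z : 𝒵) : ℝ :=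
  ∑ g : 𝒢, if φ (s, g) = z then pSG p s g else 0

lemma QQ_eq_sum (p : 𝒮 × 𝒢 × 𝒜 → ℝ) (φ : 𝒮 × 𝒢 → 𝒵) (s : 𝒮) (z : 𝒵) :
    QQ p φ s z = ∑ a : 𝒜, qq p φ s z a := by
  unfold QQ qq pSG
  rw [Finset.sum_comm]
  exact Finset.sum_congr rfl fun g _ => by split <;> simp

lemma Pr_joint (p : 𝒮 × 𝒢 × 𝒜 → ℝ) (φ : 𝒮 × 𝒢 → 𝒵) (a : 𝒜) (g : 𝒢) (s : 𝒮) (z : 𝒵) :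
    Pr p (fun ω => (ω.2.2, ω.2.1, (ω.1, φ (ω.1, ω.2.1)))) (a, g, (s, z)) =
      if φ (s, g) = z then p (s, g, a) else 0 := by
  unfold Pr
  rw [Finset.sum_eq_single (s, g, a)]
  · simp [Prod.ext_iff]
  · rintro ⟨s', g', a'⟩ _ hb
    rw [if_neg]
    intro hc
    simp [Prod.ext_iff] at hc
    exact hb (by simp [hc.1, hc.2.1, hc.2.2.1])
  · intro h; exact absurd (Finset.mem_univ _) h

lemma Pr_W (p : 𝒮 × 𝒢 × 𝒜 → ℝ) (φ : 𝒮 × 𝒢 → 𝒵) (s : 𝒮) (z : 𝒵) :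
    Pr p (fun ω => (ω.1, φ (ω.1, ω.2.1))) (s, z) = QQ p φ s z := by
  unfold Pr QQ pSG
  rw [Fintype.sum_prod_type]
  rw [Finset.sum_eq_single s]
  · rw [Fintype.sum_prod_type]
    refine Finset.sum_congr rfl fun g _ => ?_
    simp [Prod.ext_iff]
  · intro s' _ hs
    rw [Fintype.sum_prod_type]
    refine Finset.sum_eq_zero fun g _ => Finset.sum_eq_zero fun a _ => ?_
    rw [if_neg]; intro hc; exact hs (congrArg Prod.fst hc)
  · intro h; exact absurd (Finset.mem_univ _) h

lemma Pr_XW (p : 𝒮 × 𝒢 × 𝒜 → ℝ) (φ : 𝒮 × 𝒢 → 𝒵) (a : 𝒜) (s : 𝒮) (z : 𝒵) :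
    Pr p (fun ω => (ω.2.2, (ω.1, φ (ω.1, ω.2.1)))) (a, (s, z)) = qq p φ s z a := by
  unfold Pr qq
  rw [Fintype.sum_prod_type]
  rw [Finset.sum_eq_single s]
  · rw [Fintype.sum_prod_type]
    refine Finset.sum_congr rfl fun g _ => ?_
    rw [Finset.sum_eq_single a]
    · simp [Prod.ext_iff]
    · intro a' _ ha
      rw [if_neg]; intro hc; simp [Prod.ext_iff] at hc; exact ha hc.1
    · intro h; exact absurd (Finset.mem_univ _) h
  · intro s' _ hs
    rw [Fintype.sum_prod_type]
    refine Finset.sum_eq_zero fun g _ => Finset.sum_eq_zero fun a' _ => ?_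
    rw [if_neg]; intro hc; simp [Prod.ext_iff] at hc; exact hs hc.2.1
  · intro h; exact absurd (Finset.mem_univ _) h

lemma Pr_YW (p : 𝒮 × 𝒢 × 𝒜 → ℝ) (φ : 𝒮 × 𝒢 → 𝒵) (g : 𝒢) (s : 𝒮) (z : 𝒵) :
    Pr p (fun ω => (ω.2.1, (ω.1, φ (ω.1, ω.2.1)))) (g, (s, z)) =
      if φ (s, g) = z then pSG p s g else 0 := by
  unfold Pr pSG
  rw [Fintype.sum_prod_type]
  rw [Finset.sum_eq_single s]
  · rw [Fintype.sum_prod_type]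
    rw [Finset.sum_eq_single g]
    · simp [Prod.ext_iff]
    · intro g' _ hg
      refine Finset.sum_eq_zero fun a' _ => ?_
      rw [if_neg]; intro hc; simp [Prod.ext_iff] at hc; exact hg hc.1
    · intro h; exact absurd (Finset.mem_univ _) h
  · intro s' _ hs
    rw [Fintype.sum_prod_type]
    refine Finset.sum_eq_zero fun g' _ => Finset.sum_eq_zero fun a' _ => ?_
    rw [if_neg]; intro hc; simp [Prod.ext_iff] at hc; exact hs hc.2.1
  · intro h; exact absurd (Finset.mem_univ _) h

end helpers

section helpers2
variable {𝒮 𝒢 𝒜 𝒵 : Type*} [Fintype 𝒮] [Fintype 𝒢] [Fintype 𝒜] [Fintype 𝒵]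

lemma sum3_comm {α β γ : Type*} [Fintype α] [Fintype β] [Fintype γ] (f : α → β → γ → ℝ) :
    (∑ a : α, ∑ b : β, ∑ c : γ, f a b c) = ∑ c : γ, ∑ b : β, ∑ a : α, f a b c := by
  calc (∑ a : α, ∑ b : β, ∑ c : γ, f a b c)
      = ∑ a : α, ∑ c : γ, ∑ b : β, f a b c :=
        Finset.sum_congr rfl fun a _ => Finset.sum_comm
    _ = ∑ c : γ, ∑ a : α, ∑ b : β, f a b c := Finset.sum_comm
    _ = ∑ c : γ, ∑ b : β, ∑ a : α, f a b c :=
        Finset.sum_congr rfl fun c _ => Finset.sum_comm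

lemma gibbs {𝒜 : Type*} [Fintype 𝒜] (q π' : 𝒜 → ℝ) (hq : ∀ a, 0 ≤ q a)
    (hπ : ∀ a, 0 < π' a) (hπ1 : ∑ a, π' a = 1) :
    ∑ a, q a * Real.log (π' a) ≤ ∑ a, q a * Real.log (q a / ∑ b, q b) := by
  set Q := ∑ b, q b with hQ
  have hQ0 : 0 ≤ Q := Finset.sum_nonneg fun a _ => hq a
  have key : ∀ a, q a * Real.log (π' a) - q a * Real.log (q a / Q) ≤ π' a * Q - q a := by
    intro a
    rcases eq_or_lt_of_le (hq a) with h | h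
    · simp [h.symm]
      nlinarith [mul_nonneg (hπ a).le hQ0]
    · have hQpos : 0 < Q :=
        lt_of_lt_of_le h (Finset.single_le_sum (fun a _ => hq a) (Finset.mem_univ a))
      have h1 : q a * Real.log (π' a) - q a * Real.log (q a / Q)
          = q a * Real.log (π' a * Q / q a) := by
        rw [Real.log_div (ne_of_gt h) (ne_of_gt hQpos),
          Real.log_div (ne_of_gt (mul_pos (hπ a) hQpos)) (ne_of_gt h),
          Real.log_mul (ne_of_gt (hπ a)) (ne_of_gt hQpos)]
        ring
      rw [h1]
      have hlog := Real.log_le_sub_one_of_pos (div_pos (mul_pos (hπ a) hQpos) h)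
      have := mul_le_mul_of_nonneg_left hlog (le_of_lt h)
      calc q a * Real.log (π' a * Q / q a) ≤ q a * (π' a * Q / q a - 1) := this
        _ = π' a * Q - q a := by field_simp
  have hsum : ∑ a, (q a * Real.log (π' a) - q a * Real.log (q a / Q))
      ≤ ∑ a, (π' a * Q - q a) := Finset.sum_le_sum fun a _ => key a
  rw [Finset.sum_sub_distrib, Finset.sum_sub_distrib, ← Finset.sum_mul, hπ1] at hsum
  linarith

lemma cmi_rewrite (p : 𝒮 × 𝒢 × 𝒜 → ℝ) (hp0 : ∀ ω, 0 ≤ p ω) (φ : 𝒮 × 𝒢 → 𝒵) :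
    CMI p (fun ω => ω.2.2) (fun ω => ω.2.1) (fun ω => (ω.1, φ (ω.1, ω.2.1))) =
      ∑ s : 𝒮, ∑ g : 𝒢, ∑ a : 𝒜,
        if 0 < p (s, g, a) then
          p (s, g, a) * (Real.log (pA p s g a) - Real.log (pAZ p φ s (φ (s, g)) a))
        else 0 := by
  unfold CMI
  have step : ∀ a g s z,
      (if 0 < Pr p (fun ω => (ω.2.2, ω.2.1, (ω.1, φ (ω.1, ω.2.1)))) (a, g, (s, z)) then
        Pr p (fun ω => (ω.2.2, ω.2.1, (ω.1, φ (ω.1, ω.2.1)))) (a, g, (s, z)) *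
          Real.log ((Pr p (fun ω => (ω.2.2, ω.2.1, (ω.1, φ (ω.1, ω.2.1)))) (a, g, (s, z)) *
              Pr p (fun ω => (ω.1, φ (ω.1, ω.2.1))) (s, z)) /
            (Pr p (fun ω => (ω.2.2, (ω.1, φ (ω.1, ω.2.1)))) (a, (s, z)) *
              Pr p (fun ω => (ω.2.1, (ω.1, φ (ω.1, ω.2.1)))) (g, (s, z))))
      else 0) =
      if φ (s, g) = z then
        (if 0 < p (s, g, a) then
          p (s, g, a) * (Real.log (pA p s g a) - Real.log (pAZ p φ s (φ (s, g)) a))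
        else 0)
      else 0 := by
    intro a g s z
    rw [Pr_joint, Pr_W, Pr_XW, Pr_YW]
    by_cases hz : φ (s, g) = z
    · rw [if_pos hz, if_pos hz, if_pos hz]
      by_cases hpp : 0 < p (s, g, a)
      · rw [if_pos hpp, if_pos hpp]
        congr 1
        have hSG : 0 < pSG p s g :=
          lt_of_lt_of_le hpp (Finset.single_le_sum (f := fun a => p (s, g, a))
            (fun a _ => hp0 _) (Finset.mem_univ a))
        have hq : 0 < qq p φ s z a :=
          lt_of_lt_of_le (by simpa [hz] using hpp)
            (Finset.single_le_sum (f := fun g' => if φ (s, g') = z then p (s, g', a) else 0)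
              (fun g' _ => by split
                              · exact hp0 _
                              · exact le_rfl) (Finset.mem_univ g))
        have hQ : 0 < QQ p φ s z :=
          lt_of_lt_of_le (by simpa [hz] using hSG)
            (Finset.single_le_sum (f := fun g' => if φ (s, g') = z then pSG p s g' else 0)
              (fun g' _ => by split
                              · exact Finset.sum_nonneg fun a _ => hp0 _
                              · exact le_rfl) (Finset.mem_univ g))
        have hratio : p (s, g, a) * QQ p φ s z / (qq p φ s z a * pSG p s g)
            = (p (s, g, a) / pSG p s g) / (qq p φ s z a / QQ p φ s z) := by
          field_simp
        have hpA : pA p s g a = p (s, g, a) / pSG p s g := rfl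
        have hpAZ : pAZ p φ s (φ (s, g)) a = qq p φ s z a / QQ p φ s z := by
          unfold pAZ qq QQ; rw [hz]
        show Real.log (p (s, g, a) * QQ p φ s z / (qq p φ s z a * pSG p s g)) = _
        rw [hratio, hpA, hpAZ]
        exact Real.log_div (by positivity) (by positivity)
      · rw [if_neg hpp, if_neg hpp]
    · simp [hz]
  simp only [Fintype.sum_prod_type]
  calc ∑ a : 𝒜, ∑ g : 𝒢, ∑ s : 𝒮, ∑ z : 𝒵,
        (if 0 < Pr p (fun ω => (ω.2.2, ω.2.1, (ω.1, φ (ω.1, ω.2.1)))) (a, g, (s, z)) then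
          Pr p (fun ω => (ω.2.2, ω.2.1, (ω.1, φ (ω.1, ω.2.1)))) (a, g, (s, z)) *
            Real.log ((Pr p (fun ω => (ω.2.2, ω.2.1, (ω.1, φ (ω.1, ω.2.1)))) (a, g, (s, z)) *
                Pr p (fun ω => (ω.1, φ (ω.1, ω.2.1))) (s, z)) /
              (Pr p (fun ω => (ω.2.2, (ω.1, φ (ω.1, ω.2.1)))) (a, (s, z)) *
                Pr p (fun ω => (ω.2.1, (ω.1, φ (ω.1, ω.2.1)))) (g, (s, z))))
        else 0)
      = ∑ a : 𝒜, ∑ g : 𝒢, ∑ s : 𝒮,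
          (if 0 < p (s, g, a) then
            p (s, g, a) * (Real.log (pA p s g a) - Real.log (pAZ p φ s (φ (s, g)) a))
          else 0) := by
        refine Finset.sum_congr rfl fun a _ => Finset.sum_congr rfl fun g _ =>
          Finset.sum_congr rfl fun s _ => ?_
        simp only [step a g s]
        simp
    _ = ∑ s : 𝒮, ∑ g : 𝒢, ∑ a : 𝒜,
          (if 0 < p (s, g, a) then
            p (s, g, a) * (Real.log (pA p s g a) - Real.log (pAZ p φ s (φ (s, g)) a))
          else 0) := sum3_comm _

lemma regroup (p : 𝒮 × 𝒢 × 𝒜 → ℝ) (φ : 𝒮 × 𝒢 → 𝒵) (s : 𝒮) (f : 𝒵 → 𝒜 → ℝ) :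
    ∑ g : 𝒢, ∑ a : 𝒜, p (s, g, a) * f (φ (s, g)) a
      = ∑ z : 𝒵, ∑ a : 𝒜, qq p φ s z a * f z a := by
  calc ∑ g : 𝒢, ∑ a : 𝒜, p (s, g, a) * f (φ (s, g)) a
      = ∑ g : 𝒢, ∑ a : 𝒜, ∑ z : 𝒵, (if φ (s, g) = z then p (s, g, a) * f z a else 0) := by
        refine Finset.sum_congr rfl fun g _ => Finset.sum_congr rfl fun a _ => ?_
        simp
    _ = ∑ z : 𝒵, ∑ a : 𝒜, ∑ g : 𝒢, (if φ (s, g) = z then p (s, g, a) * f z a else 0) :=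
        sum3_comm _
    _ = ∑ z : 𝒵, ∑ a : 𝒜, qq p φ s z a * f z a := by
        refine Finset.sum_congr rfl fun z _ => Finset.sum_congr rfl fun a _ => ?_
        unfold qq
        rw [Finset.sum_mul]
        exact Finset.sum_congr rfl fun g _ => by by_cases h : φ (s, g) = z <;> simp [h]

end helpers2

/-- **Near-optimal actor NLL implies approximate action sufficiency.**
With `Z = φ(S,G)`, for every strictly positive policy `π`:
`I(A;G|S,Z) ≤ L_act(π;φ) − H(A|S,G)`; consequently, if `L_act(π;φ) ≤ H(A|S,G) + ε`
for some `ε ≥ 0`, then `I(A;G|S,Z) ≤ ε`. -/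
theorem cmi_le_excess_logloss {𝒮 𝒢 𝒜 𝒵 : Type*}
    [Fintype 𝒮] [Fintype 𝒢] [Fintype 𝒜] [Fintype 𝒵]
    [Nonempty 𝒮] [Nonempty 𝒢] [Nonempty 𝒜] [Nonempty 𝒵]
    (p : 𝒮 × 𝒢 × 𝒜 → ℝ) (hp0 : ∀ ω, 0 ≤ p ω) (hp1 : ∑ ω : 𝒮 × 𝒢 × 𝒜, p ω = 1)
    (φ : 𝒮 × 𝒢 → 𝒵) (π : 𝒮 → 𝒵 → 𝒜 → ℝ)
    (hπpos : ∀ s z a, 0 < π s z a) (hπsum : ∀ s z, ∑ a : 𝒜, π s z a = 1) :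
    CMI p (fun ω => ω.2.2) (fun ω => ω.2.1) (fun ω => (ω.1, φ (ω.1, ω.2.1))) ≤
        Lact p φ π - HASG p ∧
      ∀ ε : ℝ, 0 ≤ ε → Lact p φ π ≤ HASG p + ε →
        CMI p (fun ω => ω.2.2) (fun ω => ω.2.1) (fun ω => (ω.1, φ (ω.1, ω.2.1))) ≤ ε := by
  have key2 : ∀ s : 𝒮,
      (∑ g : 𝒢, ∑ a : 𝒜, p (s, g, a) * Real.log (π s (φ (s, g)) a))
        ≤ ∑ g : 𝒢, ∑ a : 𝒜, p (s, g, a) * Real.log (pAZ p φ s (φ (s, g)) a) := by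
    intro s
    rw [regroup p φ s (fun z a => Real.log (π s z a)),
        regroup p φ s (fun z a => Real.log (pAZ p φ s z a))]
    refine Finset.sum_le_sum fun z _ => ?_
    have hq0 : ∀ a, 0 ≤ qq p φ s z a := fun a =>
      Finset.sum_nonneg fun g _ => by by_cases h : φ (s, g) = z <;> simp [h, hp0]
    have hrw : ∀ a, pAZ p φ s z a = qq p φ s z a / ∑ b : 𝒜, qq p φ s z b := by
      intro a
      have h0 : pAZ p φ s z a = qq p φ s z a / QQ p φ s z := rfl
      rw [h0, QQ_eq_sum]
    have hg := gibbs (qq p φ s z) (π s z) hq0 (hπpos s z) (hπsum s z)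
    calc (∑ a : 𝒜, qq p φ s z a * Real.log (π s z a))
        ≤ ∑ a : 𝒜, qq p φ s z a * Real.log (qq p φ s z a / ∑ b : 𝒜, qq p φ s z b) := hg
      _ = ∑ a : 𝒜, qq p φ s z a * Real.log (pAZ p φ s z a) :=
          Finset.sum_congr rfl fun a _ => by rw [hrw a]
  have hite : ∀ (ω : 𝒮 × 𝒢 × 𝒜) (x : ℝ), (if 0 < p ω then p ω * x else 0) = p ω * x := by
    intro ω x
    rcases (hp0 ω).eq_or_lt with h | h
    · simp [← h]
    · rw [if_pos h]
  have conv1 : ∀ (F : 𝒮 → 𝒢 → 𝒜 → ℝ),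
      (∑ s : 𝒮, ∑ g : 𝒢, ∑ a : 𝒜, if 0 < p (s, g, a) then p (s, g, a) * F s g a else 0)
        = ∑ s : 𝒮, ∑ g : 𝒢, ∑ a : 𝒜, p (s, g, a) * F s g a := fun F =>
    Finset.sum_congr rfl fun s _ => Finset.sum_congr rfl fun g _ =>
      Finset.sum_congr rfl fun a _ => hite (s, g, a) _
  have main : CMI p (fun ω => ω.2.2) (fun ω => ω.2.1) (fun ω => (ω.1, φ (ω.1, ω.2.1))) ≤
      Lact p φ π - HASG p := by
    rw [cmi_rewrite p hp0 φ]
    have hL : Lact p φ π - HASG p = ∑ s : 𝒮, ∑ g : 𝒢, ∑ a : 𝒜,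
        (if 0 < p (s, g, a) then
          p (s, g, a) * (Real.log (pA p s g a) - Real.log (π s (φ (s, g)) a)) else 0) := by
      unfold Lact HASG
      rw [sub_neg_eq_add, ← Finset.sum_add_distrib]
      refine Finset.sum_congr rfl fun s _ => ?_
      rw [← Finset.sum_add_distrib]
      refine Finset.sum_congr rfl fun g _ => ?_
      rw [← Finset.sum_add_distrib]
      refine Finset.sum_congr rfl fun a _ => ?_
      split
      · ring
      · simp
    rw [hL, conv1 (fun s g a => Real.log (pA p s g a) - Real.log (pAZ p φ s (φ (s, g)) a)),
      conv1 (fun s g a => Real.log (pA p s g a) - Real.log (π s (φ (s, g)) a))]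
    refine Finset.sum_le_sum fun s _ => ?_
    simp only [mul_sub, Finset.sum_sub_distrib]
    exact sub_le_sub_left (key2 s) _
  exact ⟨main, fun ε hε hL => le_trans main (by linarith)⟩
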